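/- Let n > 3 be an integer and λ ∈ (0,1). If f is a meromorphic (elliptic) function on ℂ with a pole of order m ≥ 1 at some point and f satisfies (f')² = (4/n²)(1 - f)(Sₙ(f) - λ²) where Sₙ has degree n, then a contradiction follows; i.e., any elliptic solution of this equation is constant. -/

import Mathlib

open Complex Polynomial Polynomial.Chebyshev

open Filter Topology

/-- Let `n > 3`, `0 < λ < 1`, and let `Sₙ` be the degree-`n` polynomial with
`Tₙ(x)² = Sₙ(x²)`. If `f` is an elliptic function (meromorphic on `ℂ` and doubly
periodic) possessing a pole of some order `m ≥ 1`, and `f` satisfies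
`(f')² = (4/n²)(1 - f)(Sₙ(f) - λ²)` at all points where it is analytic,
then we reach a contradiction: any elliptic solution is constant. -/
theorem no_elliptic_solution (n : ℕ) (hn : 3 < n) (lam : ℝ) (hlam : lam ∈ Set.Ioo (0 : ℝ) 1)
    (S : Polynomial ℂ) (hSdeg : S.natDegree = n)
    (hS : ∀ x : ℂ, ((T ℂ n).eval x) ^ 2 = S.eval (x ^ 2))
    (f : ℂ → ℂ) (hf : ∀ z : ℂ, MeromorphicAt f z)
    (ω₁ ω₂ : ℂ) (hω : LinearIndependent ℝ ![ω₁, ω₂])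
    (hper₁ : ∀ z : ℂ, f (z + ω₁) = f z) (hper₂ : ∀ z : ℂ, f (z + ω₂) = f z)
    (z₀ : ℂ) (m : ℕ) (hm : 1 ≤ m) (hpole : meromorphicOrderAt f z₀ = ((-(m : ℤ) : ℤ) : WithTop ℤ))
    (hde : ∀ z : ℂ, AnalyticAt ℂ f z → (deriv f z) ^ 2 =
      (4 / (n : ℂ) ^ 2) * (1 - f z) * (S.eval (f z) - (lam : ℂ) ^ 2)) :
    False := by
  -- exponent bookkeeping: `e = m(n-1) - 2 ≥ 1`
  have h4m : m + 3 ≤ m * n := by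
    have h1 : m * 4 ≤ m * n := Nat.mul_le_mul_left m (by omega)
    generalize m * n = K at h1 ⊢
    omega
  obtain ⟨e, he1, he2⟩ : ∃ e, 1 ≤ e ∧ m * n = e + m + 2 := by
    generalize h : m * n = K at h4m ⊢
    exact ⟨K - m - 2, by omega, by omega⟩
  have he2' : n * m = e + m + 2 := (Nat.mul_comm n m).trans he2
  -- Laurent data at `z₀`: `f z = (z - z₀)⁻ᵐ g z` with `g` analytic, `g z₀ ≠ 0`
  obtain ⟨g, hg_an, hg_ne, hg_eq⟩ := (meromorphicOrderAt_eq_int_iff (hf z₀)).mp hpole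
  simp only [smul_eq_mul] at hg_eq
  have hg_eq' : ∀ᶠ z in 𝓝[≠] z₀, ∀ᶠ w in 𝓝[{z₀}ᶜ] z, f w = (w - z₀) ^ (-(m : ℤ)) * g w :=
    eventually_eventually_nhdsWithin.mpr hg_eq
  -- the differential equation, multiplied by `(z - z₀)^((n+1)m)`, on a punctured nbhd of `z₀`
  have hFH : ∀ᶠ z in 𝓝[≠] z₀,
      (z - z₀) ^ e * ((z - z₀) * deriv g z - (m : ℂ) * g z) ^ 2 =
      (4 / (n : ℂ) ^ 2) * ((z - z₀) ^ m - g z) *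
        ((∑ k ∈ Finset.range (n + 1), S.coeff k * g z ^ k * (z - z₀) ^ ((n - k) * m))
          - (lam : ℂ) ^ 2 * (z - z₀) ^ (e + m + 2)) := by
    filter_upwards [hg_eq, hg_eq', (hf z₀).eventually_analyticAt,
      (hg_an.eventually_analyticAt.filter_mono nhdsWithin_le_nhds),
      eventually_mem_nhdsWithin] with z hfz hnear hfa hga hz
    rw [Set.mem_compl_iff, Set.mem_singleton_iff] at hz
    have hw : z - z₀ ≠ 0 := sub_ne_zero.mpr hz
    have hu : (z - z₀) ^ m ≠ 0 := pow_ne_zero _ hw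
    have hu1 : (z - z₀) ^ (m + 1) ≠ 0 := pow_ne_zero _ hw
    have hz1 : (z - z₀) ^ (-(m : ℤ)) = ((z - z₀) ^ m)⁻¹ := by
      rw [zpow_neg, zpow_natCast]
    have hz2 : (z - z₀) ^ (-(m : ℤ) - 1) = ((z - z₀) ^ (m + 1))⁻¹ := by
      rw [show (-(m : ℤ) - 1) = -((m + 1 : ℕ) : ℤ) by push_cast; ring, zpow_neg, zpow_natCast]
    -- derivative of f at z
    have hEq : f =ᶠ[𝓝 z] fun w => (w - z₀) ^ (-(m : ℤ)) * g w := by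
      rwa [← nhdsWithin_eq_nhds.mpr (compl_singleton_mem_nhds hz)]
    have hgd : HasDerivAt g (deriv g z) z := hga.differentiableAt.hasDerivAt
    have hpd : HasDerivAt (fun w => (w - z₀) ^ (-(m : ℤ)))
        (((-(m : ℤ) : ℤ) : ℂ) * (z - z₀) ^ (-(m : ℤ) - 1) * 1) z :=
      by
        have h1 : HasDerivAt (fun w : ℂ => w - z₀) 1 z := (hasDerivAt_id z).sub_const z₀
        have h2 : HasDerivAt (fun x : ℂ => x ^ (-(m : ℤ)))
            (((-(m : ℤ) : ℤ) : ℂ) * (z - z₀) ^ (-(m : ℤ) - 1)) ((fun w : ℂ => w - z₀) z) :=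
          hasDerivAt_zpow (-(m : ℤ)) (z - z₀) (Or.inl hw)
        exact h2.comp z h1
    have hdf : deriv f z = ((-(m : ℤ) : ℤ) : ℂ) * (z - z₀) ^ (-(m : ℤ) - 1) * 1 * g z
        + (z - z₀) ^ (-(m : ℤ)) * deriv g z := by
      rw [hEq.deriv_eq]
      exact (hpd.mul hgd).deriv
    -- clean (inverse-free) forms
    have hdf' : deriv f z * (z - z₀) ^ (m + 1) = (z - z₀) * deriv g z - (m : ℂ) * g z := by
      rw [hdf, hz1, hz2]
      push_cast
      field_simp
      ring
    have hfz' : f z * (z - z₀) ^ m = g z := by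
      rw [hfz, hz1]; field_simp
    have hSum : (z - z₀) ^ (e + m + 2) * S.eval (f z)
        = ∑ k ∈ Finset.range (n + 1), S.coeff k * g z ^ k * (z - z₀) ^ ((n - k) * m) := by
      rw [hfz, hz1, Polynomial.eval_eq_sum_range, hSdeg, Finset.mul_sum]
      apply Finset.sum_congr rfl
      intro k hk
      rw [Finset.mem_range] at hk
      have hkn : k ≤ n := by omega
      have hexp : (n - k) * m + m * k = e + m + 2 := by
        rw [Nat.sub_mul, Nat.mul_comm m k, ← he2']
        have h1 : k * m ≤ n * m := Nat.mul_le_mul_right m hkn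
        generalize k * m = A at *
        generalize n * m = B at *
        omega
      rw [mul_pow, inv_pow, ← pow_mul, ← hexp, pow_add]
      have hmk : (z - z₀) ^ (m * k) ≠ 0 := pow_ne_zero _ hw
      field_simp
    have hzde := hde z hfa
    calc (z - z₀) ^ e * ((z - z₀) * deriv g z - (m : ℂ) * g z) ^ 2
        = (z - z₀) ^ e * ((deriv f z * (z - z₀) ^ (m + 1)) ^ 2) := by rw [hdf']
      _ = (deriv f z) ^ 2 * (z - z₀) ^ (e + 2 * m + 2) := by ring
      _ = (4 / (n : ℂ) ^ 2) * (1 - f z) * (S.eval (f z) - (lam : ℂ) ^ 2)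
            * (z - z₀) ^ (e + 2 * m + 2) := by rw [hzde]
      _ = (4 / (n : ℂ) ^ 2) * ((z - z₀) ^ m - f z * (z - z₀) ^ m) *
            ((z - z₀) ^ (e + m + 2) * S.eval (f z)
              - (lam : ℂ) ^ 2 * (z - z₀) ^ (e + m + 2)) := by ring
      _ = _ := by rw [hfz', hSum]
  -- now compare limits at `z₀` of the two sides
  have hdg : ContinuousAt (deriv g) z₀ := by
    have h1 : ContinuousAt (fun z => (ContinuousLinearMap.apply ℂ ℂ (1 : ℂ)) (fderiv ℂ g z)) z₀ :=
      (ContinuousLinearMap.apply ℂ ℂ (1 : ℂ)).continuous.continuousAt.comp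
        hg_an.fderiv.continuousAt
    simpa only [ContinuousLinearMap.apply_apply, fderiv_apply_one_eq_deriv] using h1
  set F : ℂ → ℂ := fun z => (z - z₀) ^ e * ((z - z₀) * deriv g z - (m : ℂ) * g z) ^ 2 with hF
  set H : ℂ → ℂ := fun z => (4 / (n : ℂ) ^ 2) * ((z - z₀) ^ m - g z) *
        ((∑ k ∈ Finset.range (n + 1), S.coeff k * g z ^ k * (z - z₀) ^ ((n - k) * m))
          - (lam : ℂ) ^ 2 * (z - z₀) ^ (e + m + 2)) with hH
  have hFc : ContinuousAt F z₀ := by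
    apply ContinuousAt.mul
    · exact (continuousAt_id.sub continuousAt_const).pow e
    · exact (((continuousAt_id.sub continuousAt_const).mul hdg).sub
        (continuousAt_const.mul hg_an.continuousAt)).pow 2
  have hHc : ContinuousAt H z₀ := by
    apply ContinuousAt.mul
    · exact continuousAt_const.mul
        (((continuousAt_id.sub continuousAt_const).pow m).sub hg_an.continuousAt)
    · apply ContinuousAt.sub
      · exact tendsto_finset_sum _ fun k _ =>
          (continuousAt_const.mul (hg_an.continuousAt.pow k)).mul
            ((continuousAt_id.sub continuousAt_const).pow _)
      · exact continuousAt_const.mul ((continuousAt_id.sub continuousAt_const).pow _)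
  have hF0 : F z₀ = 0 := by
    simp only [hF, sub_self, zero_pow (by omega : e ≠ 0), zero_mul]
  have hH0 : H z₀ = (4 / (n : ℂ) ^ 2) * (-(g z₀)) * (S.coeff n * g z₀ ^ n) := by
    simp only [hH, sub_self, zero_pow (by omega : m ≠ 0),
      zero_pow (by omega : e + m + 2 ≠ 0), mul_zero, zero_sub, sub_zero]
    congr 1
    rw [Finset.sum_eq_single_of_mem n (Finset.self_mem_range_succ n)]
    · rw [Nat.sub_self, zero_mul, pow_zero, mul_one]
    · intro k hk hkn
      rw [Finset.mem_range] at hk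
      rw [zero_pow (Nat.mul_ne_zero (by omega) (by omega)), mul_zero]
  have hne : H z₀ ≠ 0 := by
    have hn0 : (n : ℂ) ≠ 0 := Nat.cast_ne_zero.mpr (by omega)
    have hS0 : S ≠ 0 := by
      intro h
      rw [h, Polynomial.natDegree_zero] at hSdeg
      omega
    have hlead : S.coeff n ≠ 0 := by
      rw [← hSdeg]
      exact mt Polynomial.leadingCoeff_eq_zero.mp hS0
    rw [hH0]
    exact mul_ne_zero (mul_ne_zero (div_ne_zero (by norm_num) (pow_ne_zero _ hn0))
      (neg_ne_zero.mpr hg_ne)) (mul_ne_zero hlead (pow_ne_zero _ hg_ne))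
  have hlimF : Tendsto F (𝓝[≠] z₀) (𝓝 0) := by
    rw [← hF0]
    exact hFc.continuousWithinAt.tendsto
  have hlimH : Tendsto H (𝓝[≠] z₀) (𝓝 (H z₀)) := hHc.continuousWithinAt.tendsto
  have : (0 : ℂ) = H z₀ := tendsto_nhds_unique (hlimF.congr' hFH) hlimH
  exact hne this.symm
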